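/- Let D be a contractive, transposition invariant, and jointly convex distance on two-qubit density matrices. For any Bell-diagonal density matrix ρ = ρ(c1,c2,c3) and any two-qubit density matrix ς, define ς₀ = (1/2)·(ς + (σ2⊗σ2)·ςᵀ·(σ2⊗σ2)) (the two-qubit density matrix obtained from ς by setting both local Bloch vectors to zero while keeping the correlation matrix). Then D(ρ, ς₀) ≤ D(ρ, ς). -/

import Mathlib

open Matrix Kronecker
open scoped ComplexOrder

noncomputable section

/-- 2×2 complex matrices (single-qubit operators). -/
abbrev Mat2 := Matrix (Fin 2) (Fin 2) ℂ

/-- 4×4 complex matrices (two-qubit operators), indexed by `Fin 2 × Fin 2`. -/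
abbrev Mat4 := Matrix (Fin 2 × Fin 2) (Fin 2 × Fin 2) ℂ

/-- Pauli matrix σ₁ (x). -/
def σ1 : Mat2 := !![0, 1; 1, 0]

/-- Pauli matrix σ₂ (y). -/
def σ2 : Mat2 := !![0, -Complex.I; Complex.I, 0]

/-- Pauli matrix σ₃ (z). -/
def σ3 : Mat2 := !![1, 0; 0, -1]

/-- The Bell-diagonal state ρ(c1,c2,c3) = (1/4)(I₄ + c1 σ₁⊗σ₁ + c2 σ₂⊗σ₂ + c3 σ₃⊗σ₃). -/
def BD (c1 c2 c3 : ℝ) : Mat4 :=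
  (1 / 4 : ℂ) • ((1 : Mat4) + (c1 : ℂ) • (σ1 ⊗ₖ σ1) + (c2 : ℂ) • (σ2 ⊗ₖ σ2)
    + (c3 : ℂ) • (σ3 ⊗ₖ σ3))

/-- A two-qubit density matrix: positive semidefinite with unit trace. -/
def IsDensityMatrix (ρ : Mat4) : Prop := ρ.PosSemidef ∧ ρ.trace = 1

/-- A CPTP map given by finitely many Kraus operators. -/
def IsCPTP (Λ : Mat4 → Mat4) : Prop :=
  ∃ (n : ℕ) (K : Fin n → Mat4),
    (∑ i, (K i)ᴴ * K i) = 1 ∧ ∀ X, Λ X = ∑ i, K i * X * (K i)ᴴ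

/-- A distance `D` is contractive if it contracts under every CPTP map. -/
def Contractive (D : Mat4 → Mat4 → ℝ) : Prop :=
  ∀ Λ : Mat4 → Mat4, IsCPTP Λ → ∀ ρ σ : Mat4,
    IsDensityMatrix ρ → IsDensityMatrix σ → D (Λ ρ) (Λ σ) ≤ D ρ σ

/-- A distance `D` is invariant under transposition. -/
def TransposeInvariant (D : Mat4 → Mat4 → ℝ) : Prop :=
  ∀ ρ σ : Mat4, IsDensityMatrix ρ → IsDensityMatrix σ → D ρᵀ σᵀ = D ρ σ

/-- A distance `D` is jointly convex. -/
def JointlyConvex (D : Mat4 → Mat4 → ℝ) : Prop :=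
  ∀ q : ℝ, 0 ≤ q → q ≤ 1 → ∀ ρ σ τ ς : Mat4,
    IsDensityMatrix ρ → IsDensityMatrix σ → IsDensityMatrix τ → IsDensityMatrix ς →
    D (q • ρ + (1 - q) • σ) (q • τ + (1 - q) • ς) ≤ q * D ρ τ + (1 - q) * D σ ς

/-- A classical-classical two-qubit state: ∑ᵢⱼ pᵢⱼ |aᵢ⟩⟨aᵢ| ⊗ |bⱼ⟩⟨bⱼ| with (pᵢⱼ) a
probability distribution and {aᵢ}, {bⱼ} orthonormal bases of ℂ². -/
def IsClassical (χ : Mat4) : Prop :=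
  ∃ (p : Fin 2 → Fin 2 → ℝ) (a b : Fin 2 → Fin 2 → ℂ),
    (∀ i j, 0 ≤ p i j) ∧ (∑ i, ∑ j, p i j = 1) ∧
    (∀ i i', ∑ k, (starRingEnd ℂ) (a i k) * a i' k = if i = i' then 1 else 0) ∧
    (∀ j j', ∑ k, (starRingEnd ℂ) (b j k) * b j' k = if j = j' then 1 else 0) ∧
    χ = ∑ i, ∑ j, (p i j : ℂ) •
      (Matrix.vecMulVec (a i) (star (a i)) ⊗ₖ Matrix.vecMulVec (b j) (star (b j)))

/-- Membership in the tetrahedron of Bell-diagonal states. -/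
def InTetra (c : ℝ × ℝ × ℝ) : Prop :=
  c ∈ convexHull ℝ
    ({((1 : ℝ), (-1 : ℝ), (1 : ℝ)), ((-1 : ℝ), (1 : ℝ), (1 : ℝ)),
      ((1 : ℝ), (1 : ℝ), (-1 : ℝ)), ((-1 : ℝ), (-1 : ℝ), (-1 : ℝ))} : Set (ℝ × ℝ × ℝ))

/-- Geometric discord: distance to the set of classical states. -/
def QD (D : Mat4 → Mat4 → ℝ) (ρ : Mat4) : ℝ :=
  sInf {x : ℝ | ∃ χ : Mat4, IsClassical χ ∧ x = D ρ χ}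

/-- The Pauli matrices, indexed. -/
def pauli : Fin 3 → Mat2 := ![σ1, σ2, σ3]

lemma psd_smul {M : Mat4} (hM : M.PosSemidef) {r : ℝ} (hr : 0 ≤ r) :
    ((r : ℂ) • M).PosSemidef := by
  refine ⟨?_, fun x => ?_⟩
  · unfold Matrix.IsHermitian
    rw [Matrix.conjTranspose_smul, hM.1.eq, Complex.star_def, Complex.conj_ofReal]
  · have h := mul_nonneg (Complex.zero_le_real.mpr hr) (hM.2 x)
    rw [Finsupp.mul_sum] at h
    refine h.trans_eq (Finsupp.sum_congr fun i _ => ?_)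
    rw [Finsupp.mul_sum]
    exact Finsupp.sum_congr fun j _ => by rw [Matrix.smul_apply, smul_eq_mul]; ring

def bvec (m : Mat2) : Fin 2 × Fin 2 → ℂ := fun p => m p.1 p.2

def proj (m : Mat2) : Mat4 := ((1/2 : ℝ) : ℂ) • (Matrix.replicateCol Unit (bvec m) * (Matrix.replicateCol Unit (bvec m))ᴴ)

lemma psd_proj (m : Mat2) : (proj m).PosSemidef :=
  psd_smul (Matrix.posSemidef_self_mul_conjTranspose _) (by norm_num)

lemma proj_apply (m : Mat2) (p q : Fin 2 × Fin 2) :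
    proj m p q = (1/2 : ℂ) * (m p.1 p.2 * (starRingEnd ℂ) (m q.1 q.2)) := by
  simp [proj, Matrix.mul_apply, Matrix.conjTranspose_apply, bvec]
  try norm_num
  try ring

-- vertex identities
lemma BD_vertex1 : BD 1 (-1) 1 = proj !![1,0;0,1] := by
  ext ⟨i,j⟩ ⟨k,l⟩
  rw [proj_apply]
  fin_cases i <;> fin_cases j <;> fin_cases k <;> fin_cases l <;>
    simp [BD, σ1, σ2, σ3, Matrix.kroneckerMap_apply, Matrix.one_apply, Prod.ext_iff] <;> ring

lemma BD_vertex2 : BD (-1) 1 1 = proj !![1,0;0,-1] := by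
  ext ⟨i,j⟩ ⟨k,l⟩
  rw [proj_apply]
  fin_cases i <;> fin_cases j <;> fin_cases k <;> fin_cases l <;>
    simp [BD, σ1, σ2, σ3, Matrix.kroneckerMap_apply, Matrix.one_apply, Prod.ext_iff] <;> ring

lemma BD_vertex3 : BD 1 1 (-1) = proj !![0,1;1,0] := by
  ext ⟨i,j⟩ ⟨k,l⟩
  rw [proj_apply]
  fin_cases i <;> fin_cases j <;> fin_cases k <;> fin_cases l <;>
    simp [BD, σ1, σ2, σ3, Matrix.kroneckerMap_apply, Matrix.one_apply, Prod.ext_iff] <;> ring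

lemma BD_vertex4 : BD (-1) (-1) (-1) = proj !![0,1;-1,0] := by
  ext ⟨i,j⟩ ⟨k,l⟩
  rw [proj_apply]
  fin_cases i <;> fin_cases j <;> fin_cases k <;> fin_cases l <;>
    simp [BD, σ1, σ2, σ3, Matrix.kroneckerMap_apply, Matrix.one_apply, Prod.ext_iff] <;> ring

lemma BD_comb (a b : ℝ) (hab : a + b = 1) (x y : ℝ × ℝ × ℝ) :
    BD (a*x.1+b*y.1) (a*x.2.1+b*y.2.1) (a*x.2.2+b*y.2.2)
      = (a:ℂ) • BD x.1 x.2.1 x.2.2 + (b:ℂ) • BD y.1 y.2.1 y.2.2 := by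
  have hb : (b:ℂ) = 1 - a := by
    have : (a:ℂ) + b = 1 := by exact_mod_cast congrArg (Complex.ofReal) hab
    linear_combination this
  unfold BD
  push_cast; rw [hb]; module

lemma neg_kron (A B : Mat2) : (-A) ⊗ₖ (-B) = A ⊗ₖ B := by
  ext ⟨i,j⟩ ⟨k,l⟩; simp [Matrix.kroneckerMap_apply]

lemma BD_psd {c : ℝ × ℝ × ℝ} (hc : InTetra c) : (BD c.1 c.2.1 c.2.2).PosSemidef := by
  have hsub : ({((1 : ℝ), (-1 : ℝ), (1 : ℝ)), ((-1 : ℝ), (1 : ℝ), (1 : ℝ)),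
      ((1 : ℝ), (1 : ℝ), (-1 : ℝ)), ((-1 : ℝ), (-1 : ℝ), (-1 : ℝ))} : Set (ℝ × ℝ × ℝ)) ⊆
      {c | (BD c.1 c.2.1 c.2.2).PosSemidef} := by
    rintro x (rfl | rfl | rfl | rfl)
    · show (BD 1 (-1) 1).PosSemidef
      rw [BD_vertex1]; exact psd_proj _
    · show (BD (-1) 1 1).PosSemidef
      rw [BD_vertex2]; exact psd_proj _
    · show (BD 1 1 (-1)).PosSemidef
      rw [BD_vertex3]; exact psd_proj _
    · show (BD (-1) (-1) (-1)).PosSemidef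
      rw [BD_vertex4]; exact psd_proj _
  have hconv : Convex ℝ {c : ℝ × ℝ × ℝ | (BD c.1 c.2.1 c.2.2).PosSemidef} := by
    intro x hx y hy a b ha hb hab
    show (BD (a • x + b • y).1 (a • x + b • y).2.1 (a • x + b • y).2.2).PosSemidef
    rw [show (a • x + b • y).1 = a * x.1 + b * y.1 from rfl,
      show (a • x + b • y).2.1 = a * x.2.1 + b * y.2.1 from rfl,
      show (a • x + b • y).2.2 = a * x.2.2 + b * y.2.2 from rfl,
      BD_comb a b hab x y]
    exact (psd_smul hx ha).add (psd_smul hy hb)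
  exact convexHull_min hsub hconv hc

lemma BD_trace (c1 c2 c3 : ℝ) : (BD c1 c2 c3).trace = 1 := by
  simp [BD, Matrix.trace, Matrix.diag, Fintype.sum_prod_type, Fin.sum_univ_two,
    σ1, σ2, σ3, Matrix.one_apply, Matrix.kroneckerMap_apply]
  ring

lemma σ2_mul_σ2' : σ2 * σ2 = 1 := by
  ext i j; fin_cases i <;> fin_cases j <;>
    simp [σ2, Matrix.mul_apply, Fin.sum_univ_two, Matrix.one_apply, Complex.I_mul_I]

lemma Y_mul_Y : (σ2 ⊗ₖ σ2) * (σ2 ⊗ₖ σ2) = (1 : Mat4) := by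
  rw [← Matrix.mul_kronecker_mul, σ2_mul_σ2', Matrix.one_kronecker_one]

lemma Y_herm : (σ2 ⊗ₖ σ2)ᴴ = σ2 ⊗ₖ σ2 := by
  ext ⟨i,j⟩ ⟨k,l⟩
  fin_cases i <;> fin_cases j <;> fin_cases k <;> fin_cases l <;>
    simp [σ2, Matrix.conjTranspose_apply, Matrix.kroneckerMap_apply]

lemma σ1_T : σ1ᵀ = σ1 := by ext i j; fin_cases i <;> fin_cases j <;> simp [σ1]
lemma σ3_T : σ3ᵀ = σ3 := by ext i j; fin_cases i <;> fin_cases j <;> simp [σ3]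
lemma σ2_T : σ2ᵀ = -σ2 := by ext i j; fin_cases i <;> fin_cases j <;> simp [σ2]

lemma BD_T (c1 c2 c3 : ℝ) : (BD c1 c2 c3)ᵀ = BD c1 c2 c3 := by
  unfold BD
  rw [Matrix.transpose_smul]
  congr 1
  rw [Matrix.transpose_add, Matrix.transpose_add, Matrix.transpose_add, Matrix.transpose_one,
    Matrix.transpose_smul, Matrix.transpose_smul, Matrix.transpose_smul,
    ← Matrix.kroneckerMap_transpose, ← Matrix.kroneckerMap_transpose,
    ← Matrix.kroneckerMap_transpose, σ1_T, σ2_T, σ3_T, neg_kron]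

lemma σ2σ1σ2 : σ2 * σ1 * σ2 = -σ1 := by
  ext i j; fin_cases i <;> fin_cases j <;>
    simp [σ1, σ2, Matrix.mul_apply, Fin.sum_univ_two]

lemma σ2σ3σ2 : σ2 * σ3 * σ2 = -σ3 := by
  ext i j; fin_cases i <;> fin_cases j <;>
    simp [σ3, σ2, Matrix.mul_apply, Fin.sum_univ_two]

lemma Y_BD_Y (c1 c2 c3 : ℝ) :
    (σ2 ⊗ₖ σ2) * BD c1 c2 c3 * (σ2 ⊗ₖ σ2) = BD c1 c2 c3 := by
  have e2 : (σ2 ⊗ₖ σ2) * (σ1 ⊗ₖ σ1) * (σ2 ⊗ₖ σ2) = σ1 ⊗ₖ σ1 := by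
    rw [← Matrix.mul_kronecker_mul, ← Matrix.mul_kronecker_mul, σ2σ1σ2, neg_kron]
  have e4 : (σ2 ⊗ₖ σ2) * (σ3 ⊗ₖ σ3) * (σ2 ⊗ₖ σ2) = σ3 ⊗ₖ σ3 := by
    rw [← Matrix.mul_kronecker_mul, ← Matrix.mul_kronecker_mul, σ2σ3σ2, neg_kron]
  unfold BD
  simp only [Matrix.mul_smul, Matrix.smul_mul, Matrix.mul_add, Matrix.add_mul,
    Matrix.mul_one, Y_mul_Y, one_mul, e2, e4]
lemma BD_psd' (c1 c2 c3 : ℝ) (hc : InTetra (c1, c2, c3)) : (BD c1 c2 c3).PosSemidef := by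
  have h := BD_psd hc
  simp only at h
  exact h

/-- erasing the local Bloch vectors of ς (via
ς₀ = (ς + (σ₂⊗σ₂)·ςᵀ·(σ₂⊗σ₂))/2) cannot increase the distance to a Bell-diagonal state. -/
theorem distance_decreases_erasing_local_Bloch_vectors
    (D : Mat4 → Mat4 → ℝ) (hD : Contractive D) (hT : TransposeInvariant D)
    (hJC : JointlyConvex D)
    (c1 c2 c3 : ℝ) (hc : InTetra (c1, c2, c3)) (ς : Mat4) (hς : IsDensityMatrix ς) :
    D (BD c1 c2 c3) ((1 / 2 : ℂ) • (ς + (σ2 ⊗ₖ σ2) * ςᵀ * (σ2 ⊗ₖ σ2)))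
      ≤ D (BD c1 c2 c3) ς := by
  have hρ : IsDensityMatrix (BD c1 c2 c3) := ⟨BD_psd' c1 c2 c3 hc, BD_trace c1 c2 c3⟩
  have hρT : IsDensityMatrix (BD c1 c2 c3)ᵀ := by rw [BD_T]; exact hρ
  have hςT : IsDensityMatrix ςᵀ :=
    ⟨hς.1.transpose, by rw [Matrix.trace_transpose]; exact hς.2⟩
  have hM : IsDensityMatrix ((σ2 ⊗ₖ σ2) * ςᵀ * (σ2 ⊗ₖ σ2)) := by
    constructor
    · have := (hς.1.transpose).mul_mul_conjTranspose_same (σ2 ⊗ₖ σ2)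
      rwa [Y_herm] at this
    · rw [Matrix.trace_mul_cycle, Y_mul_Y, one_mul, Matrix.trace_transpose]
      exact hς.2
  have hCPTP : IsCPTP (fun X => (σ2 ⊗ₖ σ2) * X * (σ2 ⊗ₖ σ2)) := by
    refine ⟨1, fun _ => σ2 ⊗ₖ σ2, ?_, fun X => ?_⟩
    · simp [Y_herm, Y_mul_Y]
    · simp [Y_herm]
  have key : D (BD c1 c2 c3) ((σ2 ⊗ₖ σ2) * ςᵀ * (σ2 ⊗ₖ σ2)) ≤ D (BD c1 c2 c3) ς := by
    have h1 := hD _ hCPTP (BD c1 c2 c3)ᵀ ςᵀ hρT hςT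
    simp only at h1
    rw [BD_T, Y_BD_Y] at h1
    calc D (BD c1 c2 c3) ((σ2 ⊗ₖ σ2) * ςᵀ * (σ2 ⊗ₖ σ2)) ≤ D (BD c1 c2 c3) ςᵀ := h1
      _ = D (BD c1 c2 c3)ᵀ ςᵀ := by rw [BD_T]
      _ = D (BD c1 c2 c3) ς := hT _ _ hρ hς
  have hhalf : (1 / 2 : ℂ) • (ς + (σ2 ⊗ₖ σ2) * ςᵀ * (σ2 ⊗ₖ σ2))
      = (1/2 : ℝ) • ς + (1 - 1/2 : ℝ) • ((σ2 ⊗ₖ σ2) * ςᵀ * (σ2 ⊗ₖ σ2)) := by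
    ext i j
    simp [Matrix.smul_apply, Matrix.add_apply, Complex.real_smul]
    push_cast
    ring
  have hρsplit : BD c1 c2 c3 = (1/2 : ℝ) • BD c1 c2 c3 + (1 - 1/2 : ℝ) • BD c1 c2 c3 := by
    rw [← add_smul]; norm_num
  have hjc := hJC (1/2) (by norm_num) (by norm_num) (BD c1 c2 c3) (BD c1 c2 c3) ς
    ((σ2 ⊗ₖ σ2) * ςᵀ * (σ2 ⊗ₖ σ2)) hρ hρ hς hM
  rw [← hρsplit] at hjc
  rw [hhalf]
  refine le_trans hjc ?_
  nlinarith [key]
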